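/- Let (E,ℰ) be a measurable space and let (P_μ)_{μ∈𝒫(E)} be a nonlinear Markov chain satisfying conditions (C1), (C2) and (C3). Then there exists a unique invariant measure π ∈ 𝒫(E) (i.e. π P_π = π), and for every initial distribution μ₀ ∈ 𝒫(E) the marginal distributions μ_n satisfy ‖μ_n − π‖_TV ≤ ‖μ₀ − π‖_TV · (1 − α₂ + λ₂)^{⌊n/2⌋} · c_n for all n ∈ ℤ₊, where c_n = 1 + λ₁ if n is odd and c_n = 1 if n is even. -/

import Mathlib

open MeasureTheory ProbabilityTheory

/-- Total variation distance `‖μ − ν‖_TV = 2 sup_{A ∈ ℰ} |μ(A) − ν(A)|`. -/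
noncomputable def tvDist {E : Type*} [MeasurableSpace E] (μ ν : Measure E) : ℝ :=
  2 * ⨆ A : {s : Set E // MeasurableSet s}, |(μ A).toReal - (ν A).toReal|

/-- One step of the nonlinear chain: `μ ↦ μ P_μ`, `(νP_μ)(B) = ∫ P_μ(x,B) ν(dx)`. -/
noncomputable def stepMeasure {E : Type*} [MeasurableSpace E]
    (P : Measure E → Kernel E E) (μ : Measure E) : Measure E :=
  μ.bind (fun x => P μ x)

/-- Two-step transition kernel `Q_μ(x,B) = ∫ P_μ(x,dy) P_{μP_μ}(y,B)`. -/
noncomputable def twoStepKernel {E : Type*} [MeasurableSpace E]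
    (P : Measure E → Kernel E E) (μ : Measure E) (x : E) : Measure E :=
  (P μ x).bind (fun y => P (stepMeasure P μ) y)

/-- Marginal distributions `μ_{n+1} = μ_n P_{μ_n}` of the nonlinear Markov chain. -/
noncomputable def marginal {E : Type*} [MeasurableSpace E]
    (P : Measure E → Kernel E E) (μ0 : Measure E) : ℕ → Measure E
  | 0 => μ0
  | n + 1 => stepMeasure P (marginal P μ0 n)


namespace TVAux
open ENNReal
variable {E : Type*} [MeasurableSpace E]

lemma bdd (μ ν : Measure E) [IsProbabilityMeasure μ] [IsProbabilityMeasure ν] :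
    BddAbove (Set.range fun A : {s : Set E // MeasurableSet s} =>
      |(μ A).toReal - (ν A).toReal|) := by
  refine ⟨1, ?_⟩
  rintro x ⟨A, rfl⟩
  have h1 : (μ A).toReal ≤ 1 := by
    simpa using ENNReal.toReal_mono (by simp) (prob_le_one (μ := μ) (s := A))
  have h2 : (ν A).toReal ≤ 1 := by
    simpa using ENNReal.toReal_mono (by simp) (prob_le_one (μ := ν) (s := A))
  have h3 : 0 ≤ (μ A).toReal := ENNReal.toReal_nonneg
  have h4 : 0 ≤ (ν A).toReal := ENNReal.toReal_nonneg
  rw [abs_le]; constructor <;> linarith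

lemma abs_le_half (μ ν : Measure E) [IsProbabilityMeasure μ] [IsProbabilityMeasure ν]
    {A : Set E} (hA : MeasurableSet A) :
    |(μ A).toReal - (ν A).toReal| ≤ tvDist μ ν / 2 := by
  have := le_ciSup (bdd μ ν) (⟨A, hA⟩ : {s : Set E // MeasurableSet s})
  rw [tvDist]; linarith

lemma tvDist_nonneg (μ ν : Measure E) [IsProbabilityMeasure μ] [IsProbabilityMeasure ν] :
    0 ≤ tvDist μ ν := by
  have := abs_le_half μ ν MeasurableSet.empty
  have h : (0:ℝ) ≤ |(μ ∅).toReal - (ν ∅).toReal| := abs_nonneg _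
  linarith

lemma tvDist_le_of_forall {μ ν : Measure E} {c : ℝ}
    (h : ∀ A : Set E, MeasurableSet A → |(μ A).toReal - (ν A).toReal| ≤ c) :
    tvDist μ ν ≤ 2 * c := by
  rw [tvDist]
  have : (⨆ A : {s : Set E // MeasurableSet s}, |(μ A).toReal - (ν A).toReal|) ≤ c :=
    ciSup_le fun A => h A A.2
  linarith

lemma tvDist_le_two (μ ν : Measure E) [IsProbabilityMeasure μ] [IsProbabilityMeasure ν] :
    tvDist μ ν ≤ 2 := by
  have := tvDist_le_of_forall (μ := μ) (ν := ν) (c := 1) ?_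
  · linarith
  · intro A hA
    have : |(μ A).toReal - (ν A).toReal| ∈ Set.range fun A : {s : Set E // MeasurableSet s} =>
      |(μ A).toReal - (ν A).toReal| := ⟨⟨A, hA⟩, rfl⟩
    rcases bdd μ ν with ⟨b, hb⟩
    have h1 : (μ A).toReal ≤ 1 := by
      simpa using ENNReal.toReal_mono (by simp) (prob_le_one (μ := μ) (s := A))
    have h2 : (ν A).toReal ≤ 1 := by
      simpa using ENNReal.toReal_mono (by simp) (prob_le_one (μ := ν) (s := A))
    have h3 : 0 ≤ (μ A).toReal := ENNReal.toReal_nonneg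
    have h4 : 0 ≤ (ν A).toReal := ENNReal.toReal_nonneg
    rw [abs_le]; constructor <;> linarith

lemma tvDist_comm (μ ν : Measure E) : tvDist μ ν = tvDist ν μ := by
  unfold tvDist
  congr 1
  apply congrArg
  funext A
  rw [abs_sub_comm]

lemma tvDist_self (μ : Measure E) : tvDist μ μ = 0 := by
  unfold tvDist
  simp

lemma tvDist_triangle (μ ν ρ : Measure E) [IsProbabilityMeasure μ] [IsProbabilityMeasure ν]
    [IsProbabilityMeasure ρ] : tvDist μ ρ ≤ tvDist μ ν + tvDist ν ρ := by
  have h := tvDist_le_of_forall (μ := μ) (ν := ρ) (c := tvDist μ ν / 2 + tvDist ν ρ / 2) ?_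
  · linarith
  · intro A hA
    calc |(μ A).toReal - (ρ A).toReal|
        ≤ |(μ A).toReal - (ν A).toReal| + |(ν A).toReal - (ρ A).toReal| := abs_sub_le _ _ _
      _ ≤ tvDist μ ν / 2 + tvDist ν ρ / 2 :=
          add_le_add (abs_le_half μ ν hA) (abs_le_half ν ρ hA)

lemma eq_of_tvDist_eq_zero {μ ν : Measure E} [IsProbabilityMeasure μ] [IsProbabilityMeasure ν]
    (h : tvDist μ ν ≤ 0) : μ = ν := by
  ext A hA
  have h1 := abs_le_half μ ν hA
  have h2 : (μ A).toReal = (ν A).toReal := by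
    have := abs_nonneg ((μ A).toReal - (ν A).toReal)
    have : |(μ A).toReal - (ν A).toReal| = 0 := by linarith
    have := abs_eq_zero.mp this
    linarith [this]
  exact (ENNReal.toReal_eq_toReal_iff' (measure_ne_top μ A) (measure_ne_top ν A)).mp h2



-- one-sided ENNReal bound
lemma bind_apply_le {μ ν : Measure E} [IsProbabilityMeasure μ] [IsProbabilityMeasure ν]
    {K K' : Kernel E E} [IsMarkovKernel K] [IsMarkovKernel K'] {β γ : ℝ≥0∞}
    {s : Set E} (hs : MeasurableSet s)
    (h1 : ν.restrict s ≤ μ.restrict s) (h2 : μ.restrict sᶜ ≤ ν.restrict sᶜ)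
    {A : Set E} (hA : MeasurableSet A)
    (hcross : ∀ x y, K x A ≤ K' y A + β) (hsame : ∀ x, K x A ≤ K' x A + γ) :
    (μ.bind K) A ≤ (ν.bind K') A + (β * (μ s - ν s) + γ * (ν s + μ sᶜ)) := by
  set c : ℝ≥0∞ := ⨅ y, K' y A with hc
  set tp : ℝ≥0∞ := μ s - ν s with htp
  set tm : ℝ≥0∞ := ν sᶜ - μ sᶜ with htm
  -- bound K x A ≤ c + β
  have hKc : ∀ x, K x A ≤ c + β := by
    intro x
    rw [← tsub_le_iff_right]
    exact le_iInf fun y => tsub_le_iff_right.mpr (hcross x y)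
  have hcK' : ∀ y, c ≤ K' y A := fun y => iInf_le _ y
  have hcompl : μ sᶜ ≤ ν sᶜ := by
    have := h2 Set.univ
    simpa [Measure.restrict_apply_univ] using this
  -- tp ≤ tm
  have htple : tp ≤ tm := by
    rw [htp, tsub_le_iff_right]
    have key : μ s + μ sᶜ = (tm + ν s) + μ sᶜ := by
      rw [measure_add_measure_compl hs]
      have : tm + ν s + μ sᶜ = (tm + μ sᶜ) + ν s := by ring
      rw [this, htm, tsub_add_cancel_of_le hcompl, add_comm,
        measure_add_measure_compl hs]
      simp
    exact (ENNReal.add_le_add_iff_right (measure_ne_top μ sᶜ)).mp (le_of_eq key)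
  -- measures
  set σp : Measure E := μ.restrict s - ν.restrict s with hσp
  set σm : Measure E := ν.restrict sᶜ - μ.restrict sᶜ with hσm
  have hμs : μ.restrict s = σp + ν.restrict s := (Measure.sub_add_cancel_of_le h1).symm
  have hνsc : ν.restrict sᶜ = σm + μ.restrict sᶜ := (Measure.sub_add_cancel_of_le h2).symm
  have hσp_univ : σp Set.univ = tp := by
    rw [hσp, Measure.sub_apply MeasurableSet.univ h1]
    simp [Measure.restrict_apply_univ, htp]
  have hσm_univ : σm Set.univ = tm := by
    rw [hσm, Measure.sub_apply MeasurableSet.univ h2]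
    simp [Measure.restrict_apply_univ, htm]
  have hbindμ : (μ.bind K) A = ∫⁻ x in s, K x A ∂μ + ∫⁻ x in sᶜ, K x A ∂μ := by
    rw [Measure.bind_apply hA K.measurable.aemeasurable, lintegral_add_compl _ hs]
  have hbindν : (ν.bind K') A = ∫⁻ x in s, K' x A ∂ν + ∫⁻ x in sᶜ, K' x A ∂ν := by
    rw [Measure.bind_apply hA K'.measurable.aemeasurable, lintegral_add_compl _ hs]
  have e1 : ∫⁻ x in s, K x A ∂μ ≤ (c + β) * tp + ∫⁻ x in s, K x A ∂ν := by
    calc ∫⁻ x in s, K x A ∂μ = ∫⁻ x, K x A ∂σp + ∫⁻ x in s, K x A ∂ν := by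
          conv_lhs => rw [show μ.restrict s = σp + ν.restrict s from hμs]
          rw [lintegral_add_measure]
      _ ≤ (c + β) * tp + ∫⁻ x in s, K x A ∂ν := by
          gcongr
          calc ∫⁻ x, K x A ∂σp ≤ ∫⁻ _, (c + β) ∂σp := lintegral_mono hKc
            _ = (c + β) * tp := by rw [lintegral_const, hσp_univ]
  have e2 : ∫⁻ x in s, K x A ∂ν ≤ ∫⁻ x in s, K' x A ∂ν + γ * ν s := by
    calc ∫⁻ x in s, K x A ∂ν ≤ ∫⁻ x in s, (K' x A + γ) ∂ν := lintegral_mono hsame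
      _ = ∫⁻ x in s, K' x A ∂ν + γ * ν s := by
          rw [lintegral_add_right _ measurable_const, setLIntegral_const]
  have e3 : ∫⁻ x in sᶜ, K x A ∂μ ≤ ∫⁻ x in sᶜ, K' x A ∂μ + γ * μ sᶜ := by
    calc ∫⁻ x in sᶜ, K x A ∂μ ≤ ∫⁻ x in sᶜ, (K' x A + γ) ∂μ := lintegral_mono hsame
      _ = ∫⁻ x in sᶜ, K' x A ∂μ + γ * μ sᶜ := by
          rw [lintegral_add_right _ measurable_const, setLIntegral_const]
  have e4 : c * tm + ∫⁻ x in sᶜ, K' x A ∂μ ≤ ∫⁻ x in sᶜ, K' x A ∂ν := by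
    conv_rhs => rw [show ν.restrict sᶜ = σm + μ.restrict sᶜ from hνsc]
    rw [lintegral_add_measure]
    gcongr
    calc c * tm = c * σm Set.univ := by rw [hσm_univ]
      _ = ∫⁻ _, c ∂σm := (lintegral_const c).symm
      _ ≤ ∫⁻ x, K' x A ∂σm := lintegral_mono hcK'
  calc (μ.bind K) A = ∫⁻ x in s, K x A ∂μ + ∫⁻ x in sᶜ, K x A ∂μ := hbindμ
    _ ≤ ((c + β) * tp + ∫⁻ x in s, K x A ∂ν) + (∫⁻ x in sᶜ, K' x A ∂μ + γ * μ sᶜ) :=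
        add_le_add e1 e3
    _ ≤ ((c + β) * tp + (∫⁻ x in s, K' x A ∂ν + γ * ν s)) +
        (∫⁻ x in sᶜ, K' x A ∂μ + γ * μ sᶜ) := by gcongr
    _ ≤ ((c * tm + β * tp) + (∫⁻ x in s, K' x A ∂ν + γ * ν s)) +
        (∫⁻ x in sᶜ, K' x A ∂μ + γ * μ sᶜ) := by
          refine add_le_add (add_le_add ?_ le_rfl) le_rfl
          rw [add_mul]
          exact add_le_add (mul_le_mul_right htple c) le_rfl
    _ = (∫⁻ x in s, K' x A ∂ν + (c * tm + ∫⁻ x in sᶜ, K' x A ∂μ)) +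
        (β * tp + γ * (ν s + μ sᶜ)) := by ring
    _ ≤ (∫⁻ x in s, K' x A ∂ν + ∫⁻ x in sᶜ, K' x A ∂ν) +
        (β * tp + γ * (ν s + μ sᶜ)) := by gcongr
    _ = (ν.bind K') A + (β * tp + γ * (ν s + μ sᶜ)) := by rw [hbindν]


lemma le_add_ofReal {a b : ℝ≥0∞} {r : ℝ} (ha : a ≠ ∞) (hb : b ≠ ∞)
    (h : a.toReal ≤ b.toReal + r) : a ≤ b + ENNReal.ofReal r := by
  rcases le_or_gt r 0 with hr | hr
  · have : a.toReal ≤ b.toReal := by linarith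
    exact ((ENNReal.toReal_le_toReal ha hb).mp this).trans le_self_add
  · rw [← ENNReal.ofReal_toReal ha, ← ENNReal.ofReal_toReal hb,
      ← ENNReal.ofReal_add ENNReal.toReal_nonneg hr.le]
    exact ENNReal.ofReal_le_ofReal h

lemma toReal_sub_le_of_le {X Y D : ℝ≥0∞} (h : X ≤ Y + D) (hY : Y ≠ ∞) (hD : D ≠ ∞) :
    X.toReal - Y.toReal ≤ D.toReal := by
  have := ENNReal.toReal_mono (by simp [ENNReal.add_ne_top, hY, hD]) h
  rw [ENNReal.toReal_add hY hD] at this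
  linarith

lemma isProbabilityMeasure_bind (μ : Measure E) [IsProbabilityMeasure μ]
    (K : Kernel E E) [IsMarkovKernel K] : IsProbabilityMeasure (μ.bind ⇑K) := by
  constructor
  rw [Measure.bind_apply MeasurableSet.univ K.measurable.aemeasurable]
  simp

/-- The master contraction estimate. -/
lemma tvDist_bind_le (μ ν : Measure E) [IsProbabilityMeasure μ] [IsProbabilityMeasure ν]
    (K K' : Kernel E E) [IsMarkovKernel K] [IsMarkovKernel K'] {β γ : ℝ}
    (hβ : 0 ≤ β) (hγ : 0 ≤ γ)
    (hcross : ∀ x y, tvDist (K x) (K' y) ≤ 2 * β)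
    (hsame : ∀ x, tvDist (K x) (K' x) ≤ 2 * γ) :
    tvDist (μ.bind ⇑K) (ν.bind ⇑K') ≤ tvDist μ ν * β + (2 - tvDist μ ν) * γ := by
  obtain ⟨s, hs, hνμ, hμν⟩ := hahn_decomposition (μ := μ) (ν := ν)
  have hr1 : ν.restrict s ≤ μ.restrict s := by
    refine Measure.le_iff.mpr fun u hu => ?_
    rw [Measure.restrict_apply hu, Measure.restrict_apply hu]
    exact hνμ _ (hu.inter hs) Set.inter_subset_right
  have hr2 : μ.restrict sᶜ ≤ ν.restrict sᶜ := by
    refine Measure.le_iff.mpr fun u hu => ?_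
    rw [Measure.restrict_apply hu, Measure.restrict_apply hu]
    exact hμν _ (hu.inter hs.compl) Set.inter_subset_right
  set t : ℝ := (μ s).toReal - (ν s).toReal with htdef
  have hνs_le : ν s ≤ μ s := hνμ s hs subset_rfl
  have hμc_le : μ sᶜ ≤ ν sᶜ := hμν sᶜ hs.compl subset_rfl
  have ht0 : 0 ≤ t := by
    have := ENNReal.toReal_mono (measure_ne_top μ s) hνs_le
    linarith
  -- toReal compl formulas
  have hcμ : (μ sᶜ).toReal = 1 - (μ s).toReal := by
    have h1 : μ s + μ sᶜ = 1 := by rw [measure_add_measure_compl hs]; simp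
    have := congrArg ENNReal.toReal h1
    rw [ENNReal.toReal_add (measure_ne_top _ _) (measure_ne_top _ _)] at this
    simp at this; linarith
  have hcν : (ν sᶜ).toReal = 1 - (ν s).toReal := by
    have h1 : ν s + ν sᶜ = 1 := by rw [measure_add_measure_compl hs]; simp
    have := congrArg ENNReal.toReal h1
    rw [ENNReal.toReal_add (measure_ne_top _ _) (measure_ne_top _ _)] at this
    simp at this; linarith
  have ht1 : t ≤ 1 := by
    have h2 : 0 ≤ (ν s).toReal := ENNReal.toReal_nonneg
    have h1 : (μ s).toReal ≤ 1 := by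
      simpa using ENNReal.toReal_mono (by simp) (prob_le_one (μ := μ) (s := s))
    linarith
  -- the sup is attained at s
  have habs : ∀ A : Set E, MeasurableSet A → |(μ A).toReal - (ν A).toReal| ≤ t := by
    intro A hA
    have splitμ : (μ A).toReal = (μ (A ∩ s)).toReal + (μ (A \ s)).toReal := by
      rw [← ENNReal.toReal_add (measure_ne_top _ _) (measure_ne_top _ _),
        measure_inter_add_diff A hs]
    have splitν : (ν A).toReal = (ν (A ∩ s)).toReal + (ν (A \ s)).toReal := by
      rw [← ENNReal.toReal_add (measure_ne_top _ _) (measure_ne_top _ _),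
        measure_inter_add_diff A hs]
    have splitμs : (μ s).toReal = (μ (s ∩ A)).toReal + (μ (s \ A)).toReal := by
      rw [← ENNReal.toReal_add (measure_ne_top _ _) (measure_ne_top _ _),
        measure_inter_add_diff s hA]
    have splitνs : (ν s).toReal = (ν (s ∩ A)).toReal + (ν (s \ A)).toReal := by
      rw [← ENNReal.toReal_add (measure_ne_top _ _) (measure_ne_top _ _),
        measure_inter_add_diff s hA]
    have hInt : A ∩ s = s ∩ A := Set.inter_comm A s
    have h1 : (ν (A ∩ s)).toReal ≤ (μ (A ∩ s)).toReal :=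
      ENNReal.toReal_mono (measure_ne_top _ _)
        (hνμ _ (hA.inter hs) Set.inter_subset_right)
    have h2 : (μ (A \ s)).toReal ≤ (ν (A \ s)).toReal :=
      ENNReal.toReal_mono (measure_ne_top _ _)
        (hμν _ (hA.diff hs) (Set.diff_subset_compl A s))
    have h3 : (ν (s \ A)).toReal ≤ (μ (s \ A)).toReal :=
      ENNReal.toReal_mono (measure_ne_top _ _)
        (hνμ _ (hs.diff hA) Set.diff_subset)
    -- other side: split sᶜ by A
    have splitμc : (μ sᶜ).toReal = (μ (sᶜ ∩ A)).toReal + (μ (sᶜ \ A)).toReal := by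
      rw [← ENNReal.toReal_add (measure_ne_top _ _) (measure_ne_top _ _),
        measure_inter_add_diff sᶜ hA]
    have splitνc : (ν sᶜ).toReal = (ν (sᶜ ∩ A)).toReal + (ν (sᶜ \ A)).toReal := by
      rw [← ENNReal.toReal_add (measure_ne_top _ _) (measure_ne_top _ _),
        measure_inter_add_diff sᶜ hA]
    have hAc : A \ s = sᶜ ∩ A := by ext x; simp [Set.mem_diff]; tauto
    have h4 : (μ (sᶜ \ A)).toReal ≤ (ν (sᶜ \ A)).toReal :=
      ENNReal.toReal_mono (measure_ne_top _ _)
        (hμν _ (hs.compl.diff hA) Set.diff_subset)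
    have htc : (ν sᶜ).toReal - (μ sᶜ).toReal = t := by rw [hcμ, hcν]; ring
    rw [abs_le]
    constructor
    · -- -(t) ≤ μA - νA  i.e. νA - μA ≤ t
      have key : (ν A).toReal - (μ A).toReal ≤ t := by
        rw [← htc]
        rw [splitμ, splitν, splitμc, splitνc, ← hAc]
        nlinarith [h1, h4]
      linarith
    · show (μ A).toReal - (ν A).toReal ≤ (μ s).toReal - (ν s).toReal
      rw [splitμ, splitν, splitμs, splitνs, hInt]
      nlinarith [h2, h3]
  have htv : tvDist μ ν = 2 * t := by
    refine le_antisymm (tvDist_le_of_forall habs) ?_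
    have := le_ciSup (bdd μ ν) (⟨s, hs⟩ : {u : Set E // MeasurableSet u})
    have habs_s : |(μ s).toReal - (ν s).toReal| = t := abs_of_nonneg ht0
    rw [tvDist]
    rw [habs_s] at this
    linarith
  -- probability instances for binds
  haveI h1p : IsProbabilityMeasure (μ.bind ⇑K) := isProbabilityMeasure_bind μ K
  haveI h2p : IsProbabilityMeasure (ν.bind ⇑K') := isProbabilityMeasure_bind ν K'
  -- pointwise ENNReal hypotheses
  refine le_trans (tvDist_le_of_forall (c := β * t + γ * (1 - t)) ?_) (by rw [htv]; ring_nf; linarith)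
  intro A hA
  have hcrossE : ∀ x y, K x A ≤ K' y A + ENNReal.ofReal β := fun x y =>
    le_add_ofReal (measure_ne_top _ _) (measure_ne_top _ _) (by
      have h := abs_le_half (K x) (K' y) hA
      have h2 := hcross x y
      rw [abs_le] at h; rcases h with ⟨_, h⟩; linarith)
  have hcrossE' : ∀ x y, K' x A ≤ K y A + ENNReal.ofReal β := fun x y =>
    le_add_ofReal (measure_ne_top _ _) (measure_ne_top _ _) (by
      have h := abs_le_half (K y) (K' x) hA
      have h2 := hcross y x
      rw [abs_le] at h; rcases h with ⟨h, _⟩; linarith)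
  have hsameE : ∀ x, K x A ≤ K' x A + ENNReal.ofReal γ := fun x =>
    le_add_ofReal (measure_ne_top _ _) (measure_ne_top _ _) (by
      have h := abs_le_half (K x) (K' x) hA
      have h2 := hsame x
      rw [abs_le] at h; rcases h with ⟨_, h⟩; linarith)
  have hsameE' : ∀ x, K' x A ≤ K x A + ENNReal.ofReal γ := fun x =>
    le_add_ofReal (measure_ne_top _ _) (measure_ne_top _ _) (by
      have h := abs_le_half (K x) (K' x) hA
      have h2 := hsame x
      rw [abs_le] at h; rcases h with ⟨h, _⟩; linarith)
  -- apply one-sided lemma in both directions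
  have fwd := bind_apply_le (μ := μ) (ν := ν) (K := K) (K' := K') hs hr1 hr2 hA hcrossE hsameE
  have bwd := bind_apply_le (μ := ν) (ν := μ) (K := K') (K' := K) (s := sᶜ) hs.compl hr2
    (by rw [compl_compl]; exact hr1) hA hcrossE' hsameE'
  -- convert to real
  have hDf : (ENNReal.ofReal β * (μ s - ν s) + ENNReal.ofReal γ * (ν s + μ sᶜ)) ≠ ∞ := by
    refine ENNReal.add_ne_top.mpr ⟨?_, ?_⟩ <;>
      exact ENNReal.mul_ne_top ENNReal.ofReal_ne_top (by
        first
        | exact (ENNReal.sub_ne_top (measure_ne_top _ _))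
        | exact ENNReal.add_ne_top.mpr ⟨measure_ne_top _ _, measure_ne_top _ _⟩)
  have hDf' : (ENNReal.ofReal β * (ν sᶜ - μ sᶜ) + ENNReal.ofReal γ * (μ sᶜ + ν sᶜᶜ)) ≠ ∞ := by
    refine ENNReal.add_ne_top.mpr ⟨?_, ?_⟩ <;>
      exact ENNReal.mul_ne_top ENNReal.ofReal_ne_top (by
        first
        | exact (ENNReal.sub_ne_top (measure_ne_top _ _))
        | exact ENNReal.add_ne_top.mpr ⟨measure_ne_top _ _, measure_ne_top _ _⟩)
  have hDval : (ENNReal.ofReal β * (μ s - ν s) + ENNReal.ofReal γ * (ν s + μ sᶜ)).toReal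
      = β * t + γ * (1 - t) := by
    rw [ENNReal.toReal_add (ENNReal.mul_ne_top ENNReal.ofReal_ne_top
        (ENNReal.sub_ne_top (measure_ne_top _ _)))
      (ENNReal.mul_ne_top ENNReal.ofReal_ne_top
        (ENNReal.add_ne_top.mpr ⟨measure_ne_top _ _, measure_ne_top _ _⟩)),
      ENNReal.toReal_mul, ENNReal.toReal_mul,
      ENNReal.toReal_sub_of_le hνs_le (measure_ne_top _ _),
      ENNReal.toReal_add (measure_ne_top _ _) (measure_ne_top _ _),
      ENNReal.toReal_ofReal hβ, ENNReal.toReal_ofReal hγ, hcμ]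
    ring
  have hDval' : (ENNReal.ofReal β * (ν sᶜ - μ sᶜ) + ENNReal.ofReal γ * (μ sᶜ + ν sᶜᶜ)).toReal
      = β * t + γ * (1 - t) := by
    rw [ENNReal.toReal_add (ENNReal.mul_ne_top ENNReal.ofReal_ne_top
        (ENNReal.sub_ne_top (measure_ne_top _ _)))
      (ENNReal.mul_ne_top ENNReal.ofReal_ne_top
        (ENNReal.add_ne_top.mpr ⟨measure_ne_top _ _, measure_ne_top _ _⟩)),
      ENNReal.toReal_mul, ENNReal.toReal_mul,
      ENNReal.toReal_sub_of_le hμc_le (measure_ne_top _ _),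
      ENNReal.toReal_add (measure_ne_top _ _) (measure_ne_top _ _),
      ENNReal.toReal_ofReal hβ, ENNReal.toReal_ofReal hγ, compl_compl, hcμ, hcν]
    ring
  have f1 : ((μ.bind ⇑K) A).toReal - ((ν.bind ⇑K') A).toReal ≤ β * t + γ * (1 - t) := by
    have := toReal_sub_le_of_le fwd (measure_ne_top _ _) hDf
    rw [hDval] at this; exact this
  have f2 : ((ν.bind ⇑K') A).toReal - ((μ.bind ⇑K) A).toReal ≤ β * t + γ * (1 - t) := by
    have := toReal_sub_le_of_le bwd (measure_ne_top _ _) hDf'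
    rw [hDval'] at this; exact this
  rw [abs_le]; constructor <;> linarith

open Filter Topology in
/-- Completeness of probability measures under total variation. -/
lemma exists_tv_limit (ν : ℕ → Measure E) (hprob : ∀ n, IsProbabilityMeasure (ν n))
    (hC : ∀ ε : ℝ, 0 < ε → ∃ N, ∀ m, N ≤ m → ∀ n, N ≤ n → tvDist (ν m) (ν n) ≤ ε) :
    ∃ π : Measure E, IsProbabilityMeasure π ∧
      ∀ ε : ℝ, 0 < ε → ∃ N, ∀ n, N ≤ n → tvDist (ν n) π ≤ ε := by
  have hcauchy : ∀ A : Set E, MeasurableSet A → CauchySeq (fun n => ((ν n) A).toReal) := by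
    intro A hA
    rw [Metric.cauchySeq_iff]
    intro ε hε
    obtain ⟨N, hN⟩ := hC ε hε
    refine ⟨N, fun m hm n hn => ?_⟩
    haveI := hprob m; haveI := hprob n
    have h := abs_le_half (ν m) (ν n) hA
    have h2 := hN m hm n hn
    rw [Real.dist_eq]
    calc |((ν m) A).toReal - ((ν n) A).toReal| ≤ tvDist (ν m) (ν n) / 2 := h
      _ ≤ ε / 2 := by linarith
      _ < ε := by linarith
  set f : Set E → ℝ := fun A => limUnder atTop (fun n => ((ν n) A).toReal) with hfdef
  have htend : ∀ A : Set E, MeasurableSet A →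
      Tendsto (fun n => ((ν n) A).toReal) atTop (𝓝 (f A)) :=
    fun A hA => (hcauchy A hA).tendsto_limUnder
  have hf0 : ∀ A : Set E, MeasurableSet A → 0 ≤ f A :=
    fun A hA => ge_of_tendsto' (htend A hA) fun n => ENNReal.toReal_nonneg
  have hunif : ∀ ε : ℝ, 0 < ε → ∃ N, ∀ n, N ≤ n → ∀ A : Set E, MeasurableSet A →
      |((ν n) A).toReal - f A| ≤ ε := by
    intro ε hε
    obtain ⟨N, hN⟩ := hC ε hε
    refine ⟨N, fun n hn A hA => ?_⟩
    have ht : Tendsto (fun m => |((ν n) A).toReal - ((ν m) A).toReal|) atTop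
        (𝓝 |((ν n) A).toReal - f A|) := (tendsto_const_nhds.sub (htend A hA)).abs
    refine le_of_tendsto ht ?_
    filter_upwards [eventually_ge_atTop N] with m hm
    haveI := hprob n; haveI := hprob m
    have h := abs_le_half (ν n) (ν m) hA
    have h2 := hN n hn m hm
    linarith
  have hadd2 : ∀ A B : Set E, MeasurableSet A → MeasurableSet B → Disjoint A B →
      f (A ∪ B) = f A + f B := by
    intro A B hA hB hd
    refine tendsto_nhds_unique (htend (A ∪ B) (hA.union hB)) ?_
    have : (fun n => ((ν n) (A ∪ B)).toReal)
        = fun n => ((ν n) A).toReal + ((ν n) B).toReal := by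
      funext n
      rw [measure_union hd hB, ENNReal.toReal_add (measure_ne_top _ _) (measure_ne_top _ _)]
    rw [this]
    exact (htend A hA).add (htend B hB)
  have hfempty : f ∅ = 0 := by
    refine tendsto_nhds_unique (htend ∅ MeasurableSet.empty) ?_
    have : (fun n => ((ν n) ∅).toReal) = fun _ => (0:ℝ) := by funext n; simp
    rw [this]
    exact tendsto_const_nhds
  have hfuniv : f Set.univ = 1 := by
    refine tendsto_nhds_unique (htend Set.univ MeasurableSet.univ) ?_
    have : (fun n => ((ν n) Set.univ).toReal) = fun _ => (1:ℝ) := by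
      funext n; haveI := hprob n; simp
    rw [this]
    exact tendsto_const_nhds
  -- countable additivity
  have hσadd : ∀ g : ℕ → Set E, (∀ i, MeasurableSet (g i)) → Pairwise (Function.onFun Disjoint g) →
      ENNReal.ofReal (f (⋃ i, g i)) = ∑' i, ENNReal.ofReal (f (g i)) := by
    intro g hgm hgd
    set U : Set E := ⋃ i, g i with hU
    have hUm : MeasurableSet U := MeasurableSet.iUnion hgm
    set B : ℕ → Set E := fun K => ⋃ i ∈ Finset.range K, g i with hB
    have hBm : ∀ K, MeasurableSet (B K) :=
      fun K => (Finset.range K).measurableSet_biUnion fun i _ => hgm i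
    set T : ℕ → Set E := fun K => U \ B K with hT
    have hTm : ∀ K, MeasurableSet (T K) := fun K => hUm.diff (hBm K)
    have hBU : ∀ K, B K ⊆ U := by
      intro K x hx
      simp only [hB, Set.mem_iUnion, Finset.mem_range] at hx
      obtain ⟨i, _, hi⟩ := hx
      exact Set.mem_iUnion.mpr ⟨i, hi⟩
    have hpartial : ∀ K, ∑ i ∈ Finset.range K, f (g i) = f (B K) := by
      intro K
      refine tendsto_nhds_unique ?_ (htend (B K) (hBm K))
      have heq : (fun n => ∑ i ∈ Finset.range K, ((ν n) (g i)).toReal)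
          = fun n => ((ν n) (B K)).toReal := by
        funext n
        rw [hB]
        rw [measure_biUnion_finset (fun i _ j _ hij => hgd hij) (fun i _ => hgm i)]
        exact (ENNReal.toReal_sum fun i _ => measure_ne_top _ _).symm
      have := tendsto_finset_sum (Finset.range K) fun i _ => htend (g i) (hgm i)
      rw [heq] at this
      exact this
    have hsplit : ∀ K, f U = f (B K) + f (T K) := by
      intro K
      have : B K ∪ T K = U := Set.union_diff_cancel (hBU K)
      rw [← this, hadd2 _ _ (hBm K) (hTm K) Set.disjoint_sdiff_right]
    have hT0 : Tendsto (fun K => f (T K)) atTop (𝓝 0) := by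
      rw [Metric.tendsto_atTop]
      intro ε hε
      obtain ⟨N, hN⟩ := hunif (ε/2) (by linarith)
      have hTanti : Antitone T := by
        intro K L hKL
        refine Set.diff_subset_diff_right ?_
        intro x hx
        simp only [hB, Set.mem_iUnion, Finset.mem_range] at hx ⊢
        obtain ⟨i, hi, hxi⟩ := hx
        exact ⟨i, lt_of_lt_of_le hi hKL, hxi⟩
      have hiInter : ⋂ K, T K = ∅ := by
        ext x
        simp only [Set.mem_iInter, Set.mem_empty_iff_false, iff_false]
        intro hx
        obtain ⟨j, hj⟩ := Set.mem_iUnion.mp (hx 0).1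
        have := (hx (j+1)).2
        refine this ?_
        simp only [hB, Set.mem_iUnion, Finset.mem_range]
        exact ⟨j, Nat.lt_succ_self j, hj⟩
      haveI := hprob N
      have hmeas := tendsto_measure_iInter_atTop (μ := ν N)
        (fun K => (hTm K).nullMeasurableSet) hTanti ⟨0, measure_ne_top _ _⟩
      rw [hiInter] at hmeas
      simp only [measure_empty] at hmeas
      have hreal : Tendsto (fun K => ((ν N) (T K)).toReal) atTop (𝓝 0) := by
        have := (ENNReal.tendsto_toReal (a := 0) (by simp)).comp hmeas
        simpa [Function.comp_def] using this
      rw [Metric.tendsto_atTop] at hreal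
      obtain ⟨K₀, hK₀⟩ := hreal (ε/2) (by linarith)
      refine ⟨K₀, fun K hK => ?_⟩
      have h1 := hN N le_rfl (T K) (hTm K)
      have h2 := hK₀ K hK
      rw [Real.dist_eq] at h2 ⊢
      have h3 : 0 ≤ f (T K) := hf0 _ (hTm K)
      have h4 : 0 ≤ ((ν N) (T K)).toReal := ENNReal.toReal_nonneg
      rw [abs_le] at h1
      rw [sub_zero, abs_of_nonneg h4] at h2
      rw [sub_zero, abs_of_nonneg h3]
      linarith [h1.2]
    have hBtend : Tendsto (fun K => f (B K)) atTop (𝓝 (f U)) := by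
      have : (fun K => f (B K)) = fun K => f U - f (T K) := by
        funext K; rw [hsplit K]; ring
      rw [this]
      have h : Tendsto (fun _ : ℕ => f U) atTop (𝓝 (f U)) := tendsto_const_nhds
      simpa using h.sub hT0
    have hsum : HasSum (fun i => f (g i)) (f U) := by
      rw [hasSum_iff_tendsto_nat_of_nonneg (fun i => hf0 _ (hgm i))]
      have : (fun K => ∑ i ∈ Finset.range K, f (g i)) = fun K => f (B K) :=
        funext hpartial
      rw [this]
      exact hBtend
    calc ENNReal.ofReal (f U) = ENNReal.ofReal (∑' i, f (g i)) := by rw [hsum.tsum_eq]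
      _ = ∑' i, ENNReal.ofReal (f (g i)) :=
          ENNReal.ofReal_tsum_of_nonneg (fun i => hf0 _ (hgm i)) hsum.summable
  set π : Measure E := Measure.ofMeasurable (fun A _ => ENNReal.ofReal (f A))
    (by simp only [hfempty]; simp) hσadd with hπ
  have hπ_apply : ∀ A : Set E, MeasurableSet A → π A = ENNReal.ofReal (f A) :=
    fun A hA => Measure.ofMeasurable_apply A hA
  haveI hπprob : IsProbabilityMeasure π := by
    constructor
    rw [hπ_apply Set.univ MeasurableSet.univ, hfuniv]
    simp
  refine ⟨π, hπprob, ?_⟩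
  intro ε hε
  obtain ⟨N, hN⟩ := hunif (ε/2) (by linarith)
  refine ⟨N, fun n hn => ?_⟩
  have h := tvDist_le_of_forall (μ := ν n) (ν := π) (c := ε/2) ?_
  · linarith
  · intro A hA
    rw [hπ_apply A hA, ENNReal.toReal_ofReal (hf0 A hA)]
    exact hN n hn A hA

end TVAux

open TVAux Filter Topology ENNReal

/-- under conditions (C1), (C2), (C3) there is a unique invariant measure `π`
and `‖μ_n − π‖_TV ≤ ‖μ₀ − π‖_TV (1 − α₂ + λ₂)^{⌊n/2⌋} c_n`. -/
theorem nonlinear_chain_unique_invariant_and_convergence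
    {E : Type*} [MeasurableSpace E] [Nonempty E]
    (P : Measure E → Kernel E E) (hP : ∀ μ, IsMarkovKernel (P μ))
    (α₂ lam₁ lam₂ : ℝ) (hα₂0 : 0 < α₂) (hα₂1 : α₂ < 1)
    (hlam₂0 : 0 ≤ lam₂) (hlam₂α : lam₂ ≤ α₂) (hlam₁0 : 0 ≤ lam₁)
    (C1 : ∀ (μ ν : Measure E), IsProbabilityMeasure μ → IsProbabilityMeasure ν →
      ∀ x y : E, tvDist (twoStepKernel P μ x) (twoStepKernel P ν y) ≤ 2 * (1 - α₂))
    (C2 : ∀ (μ ν : Measure E), IsProbabilityMeasure μ → IsProbabilityMeasure ν →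
      ∀ x : E, tvDist (twoStepKernel P μ x) (twoStepKernel P ν x) ≤ lam₂ * tvDist μ ν)
    (C3 : ∀ (μ ν : Measure E), IsProbabilityMeasure μ → IsProbabilityMeasure ν →
      ∀ x : E, tvDist (P μ x) (P ν x) ≤ lam₁ * tvDist μ ν) :
    ∃ π : Measure E, IsProbabilityMeasure π ∧ stepMeasure P π = π ∧
      (∀ π' : Measure E, IsProbabilityMeasure π' → stepMeasure P π' = π' → π' = π) ∧
      (∀ μ0 : Measure E, IsProbabilityMeasure μ0 → ∀ n : ℕ,
        tvDist (marginal P μ0 n) π ≤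
          tvDist μ0 π * (1 - α₂ + lam₂) ^ (n / 2) *
            (if Odd n then 1 + lam₁ else 1)) := by
  classical
  set S : Measure E → Measure E := stepMeasure P with hS
  set Tm : Measure E → Measure E := fun μ => S (S μ) with hTmdef
  have hstep : ∀ μ : Measure E, S μ = μ.bind ⇑(P μ) := fun μ => rfl
  have hprob_step : ∀ μ : Measure E, IsProbabilityMeasure μ →
      IsProbabilityMeasure (S μ) := by
    intro μ h
    haveI := h; haveI := hP μ
    rw [hstep]
    exact isProbabilityMeasure_bind μ (P μ)
  set Q : Measure E → Kernel E E := fun μ => (P (S μ)).comp (P μ) with hQdef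
  have hQmk : ∀ μ, IsMarkovKernel (Q μ) := by
    intro μ; haveI := hP μ; haveI := hP (S μ)
    rw [hQdef]; infer_instance
  have hQeq : ∀ (μ : Measure E) (x : E), Q μ x = twoStepKernel P μ x := by
    intro μ x
    rw [hQdef]
    rw [Kernel.comp_apply]
    rfl
  have hTbind : ∀ μ : Measure E, Tm μ = μ.bind ⇑(Q μ) := by
    intro μ
    haveI := hP μ; haveI := hP (S μ)
    show (μ.bind ⇑(P μ)).bind ⇑(P (S μ)) = μ.bind ⇑(Q μ)
    rw [Measure.bind_bind (P μ).measurable.aemeasurable (P (S μ)).measurable.aemeasurable]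
    congr 1
  have htv_nn : ∀ (μ ν : Measure E), IsProbabilityMeasure μ → IsProbabilityMeasure ν →
      0 ≤ tvDist μ ν := by
    intro μ ν h1 h2; haveI := h1; haveI := h2; exact tvDist_nonneg μ ν
  have htv_2 : ∀ (μ ν : Measure E), IsProbabilityMeasure μ → IsProbabilityMeasure ν →
      tvDist μ ν ≤ 2 := by
    intro μ ν h1 h2; haveI := h1; haveI := h2; exact tvDist_le_two μ ν
  -- one-step bound
  have key1 : ∀ (μ ν : Measure E), IsProbabilityMeasure μ → IsProbabilityMeasure ν →
      tvDist (S μ) (S ν) ≤ (1 + lam₁) * tvDist μ ν := by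
    intro μ ν hμ hν
    haveI := hμ; haveI := hν; haveI := hP μ; haveI := hP ν
    have htv0 : 0 ≤ tvDist μ ν := tvDist_nonneg μ ν
    have htv2 : tvDist μ ν ≤ 2 := tvDist_le_two μ ν
    have h := tvDist_bind_le μ ν (P μ) (P ν) (β := 1) (γ := lam₁ * tvDist μ ν / 2)
      one_pos.le (by positivity) ?_ ?_
    · rw [hstep μ, hstep ν]
      nlinarith [h, mul_nonneg (mul_nonneg hlam₁0 htv0) htv0]
    · intro x y
      haveI : IsProbabilityMeasure (P μ x) := IsMarkovKernel.isProbabilityMeasure x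
      haveI : IsProbabilityMeasure (P ν y) := IsMarkovKernel.isProbabilityMeasure y
      have := tvDist_le_two (P μ x) (P ν y)
      linarith
    · intro x
      have := C3 μ ν hμ hν x
      linarith
  -- two-step bound, precise form
  have key2 : ∀ (μ ν : Measure E), IsProbabilityMeasure μ → IsProbabilityMeasure ν →
      tvDist (Tm μ) (Tm ν) ≤
        tvDist μ ν * (1 - α₂) + (2 - tvDist μ ν) * (lam₂ * tvDist μ ν / 2) := by
    intro μ ν hμ hν
    haveI := hμ; haveI := hν
    haveI := hQmk μ; haveI := hQmk ν
    have htv0 : 0 ≤ tvDist μ ν := tvDist_nonneg μ ν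
    have h := tvDist_bind_le μ ν (Q μ) (Q ν) (β := 1 - α₂) (γ := lam₂ * tvDist μ ν / 2)
      (by linarith) (by positivity) ?_ ?_
    · rw [hTbind μ, hTbind ν]
      exact h
    · intro x y
      rw [hQeq, hQeq]
      exact C1 μ ν hμ hν x y
    · intro x
      rw [hQeq, hQeq]
      have := C2 μ ν hμ hν x
      linarith
  have hr0 : (0:ℝ) ≤ 1 - α₂ + lam₂ := by linarith
  have key2r : ∀ (μ ν : Measure E), IsProbabilityMeasure μ → IsProbabilityMeasure ν →
      tvDist (Tm μ) (Tm ν) ≤ (1 - α₂ + lam₂) * tvDist μ ν := by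
    intro μ ν hμ hν
    have h := key2 μ ν hμ hν
    have h0 := htv_nn μ ν hμ hν
    have h2 := htv_2 μ ν hμ hν
    nlinarith [mul_nonneg (mul_nonneg hlam₂0 h0) h0]
  -- monotone envelope
  set g : ℝ → ℝ := fun u => u * (1 - (α₂ - lam₂ + lam₂ * u / 2) / 2) with hgdef
  have hg_le : ∀ u : ℝ, 0 ≤ u → g u ≤ u := by
    intro u hu
    rw [hgdef]
    nlinarith [mul_nonneg hlam₂0 (mul_nonneg hu hu)]
  have hg_mono : ∀ u v : ℝ, 0 ≤ u → u ≤ v → v ≤ 2 → g u ≤ g v := by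
    intro u v hu huv hv2
    rw [hgdef]
    nlinarith [mul_nonneg (sub_nonneg.mpr huv) hlam₂0, mul_nonneg hu hlam₂0]
  have key2g : ∀ (μ ν : Measure E), IsProbabilityMeasure μ → IsProbabilityMeasure ν →
      tvDist (Tm μ) (Tm ν) ≤ g (tvDist μ ν) := by
    intro μ ν hμ hν
    have h := key2 μ ν hμ hν
    have h0 := htv_nn μ ν hμ hν
    rw [hgdef]
    nlinarith [mul_nonneg (mul_nonneg hlam₂0 h0) h0, mul_nonneg (sub_nonneg.mpr hlam₂α) h0]
  -- iterates from a dirac measure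
  obtain ⟨x₀⟩ := ‹Nonempty E›
  set ν : ℕ → Measure E := fun k => Tm^[k] (Measure.dirac x₀) with hνdef
  have hνsucc : ∀ k, ν (k+1) = Tm (ν k) := by
    intro k
    rw [hνdef]
    exact Function.iterate_succ_apply' Tm k _
  have hνprob : ∀ k, IsProbabilityMeasure (ν k) := by
    intro k
    induction k with
    | zero => rw [hνdef]; simpa using (by infer_instance : IsProbabilityMeasure (Measure.dirac x₀))
    | succ k ih =>
      rw [hνsucc k]
      exact hprob_step _ (hprob_step _ ih)
  set a : ℕ → ℕ → ℝ := fun k p => tvDist (ν k) (ν (k+p)) with hadef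
  set b : ℕ → ℝ := fun k => sSup (Set.range (a k)) with hbdef
  have ha0 : ∀ k p, 0 ≤ a k p := fun k p => htv_nn _ _ (hνprob k) (hνprob (k+p))
  have ha2 : ∀ k p, a k p ≤ 2 := fun k p => htv_2 _ _ (hνprob k) (hνprob (k+p))
  have hbddA : ∀ k, BddAbove (Set.range (a k)) := by
    intro k
    refine ⟨2, ?_⟩
    rintro x ⟨p, rfl⟩
    exact ha2 k p
  have hble : ∀ k p, a k p ≤ b k := fun k p => le_csSup (hbddA k) ⟨p, rfl⟩
  have hb0 : ∀ k, 0 ≤ b k := fun k => (ha0 k 0).trans (hble k 0)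
  have hb2 : ∀ k, b k ≤ 2 := by
    intro k
    refine csSup_le ⟨a k 0, ⟨0, rfl⟩⟩ ?_
    rintro x ⟨p, rfl⟩
    exact ha2 k p
  have harec : ∀ k p, a (k+1) p ≤ g (a k p) := by
    intro k p
    have h1 : a (k+1) p = tvDist (Tm (ν k)) (Tm (ν (k+p))) := by
      rw [hadef]
      simp only
      rw [show k+1+p = (k+p)+1 by omega, hνsucc, hνsucc]
    rw [h1]
    exact key2g _ _ (hνprob k) (hνprob (k+p))
  have hbrec : ∀ k, b (k+1) ≤ g (b k) := by
    intro k
    refine csSup_le ⟨a (k+1) 0, ⟨0, rfl⟩⟩ ?_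
    rintro x ⟨p, rfl⟩
    exact (harec k p).trans (hg_mono _ _ (ha0 k p) (hble k p) (hb2 k))
  have hbanti : Antitone b :=
    antitone_nat_of_succ_le fun k => (hbrec k).trans (hg_le _ (hb0 k))
  have hbddB : BddBelow (Set.range b) := ⟨0, by rintro x ⟨k, rfl⟩; exact hb0 k⟩
  have hbtend : Tendsto b atTop (𝓝 (⨅ k, b k)) := tendsto_atTop_ciInf hbanti hbddB
  set δ : ℝ := ⨅ k, b k with hδdef
  have hδ0le : 0 ≤ δ := ge_of_tendsto' hbtend hb0
  have hgcont : Continuous g := by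
    rw [hgdef]; fun_prop
  have hδle : δ ≤ g δ := by
    refine le_of_tendsto_of_tendsto' (hbtend.comp (tendsto_add_atTop_nat 1))
      ((hgcont.tendsto δ).comp hbtend) ?_
    intro k
    exact hbrec k
  have hδ0 : δ = 0 := by
    by_contra h
    have hδpos : 0 < δ := lt_of_le_of_ne hδ0le (Ne.symm h)
    rw [hgdef] at hδle
    simp only at hδle
    nlinarith [mul_pos hα₂0 hδpos, mul_nonneg hlam₂0 (mul_nonneg hδ0le hδ0le),
      mul_nonneg (sub_nonneg.mpr hlam₂α) hδ0le, mul_pos hδpos hδpos]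
  have hbtend0 : Tendsto b atTop (𝓝 0) := by rw [← hδ0]; exact hbtend
  have hCauchy : ∀ ε : ℝ, 0 < ε → ∃ N, ∀ m, N ≤ m → ∀ n, N ≤ n →
      tvDist (ν m) (ν n) ≤ ε := by
    intro ε hε
    rw [Metric.tendsto_atTop] at hbtend0
    obtain ⟨N, hN⟩ := hbtend0 ε hε
    refine ⟨N, fun m hm n hn => ?_⟩
    have key : ∀ i j, N ≤ i → i ≤ j → tvDist (ν i) (ν j) ≤ ε := by
      intro i j hi hij
      have h1 : tvDist (ν i) (ν j) = a i (j - i) := by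
        rw [hadef]; simp only
        congr 2
        omega
      have h2 := hN i hi
      rw [Real.dist_eq, sub_zero, abs_of_nonneg (hb0 i)] at h2
      have := hbanti hi
      rw [h1]
      calc a i (j-i) ≤ b i := hble i (j-i)
        _ ≤ ε := h2.le
    rcases le_total m n with hmn | hnm
    · exact key m n hm hmn
    · rw [tvDist_comm]
      exact key n m hn hnm
  obtain ⟨π, hπprob, hπlim⟩ := exists_tv_limit ν hνprob hCauchy
  haveI := hπprob
  -- π is a fixed point of Tm
  have hTmfix : Tm π = π := by
    haveI hTmπp : IsProbabilityMeasure (Tm π) := hprob_step _ (hprob_step _ hπprob)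
    have hle0 : tvDist (Tm π) π ≤ 0 := by
      by_contra hpos
      push_neg at hpos
      obtain ⟨N, hN⟩ := hπlim (tvDist (Tm π) π / 4) (by linarith)
      haveI := hνprob N
      haveI : IsProbabilityMeasure (Tm (ν N)) := hprob_step _ (hprob_step _ (hνprob N))
      have h1 : tvDist (Tm π) (Tm (ν N)) ≤ (1 - α₂ + lam₂) * tvDist π (ν N) :=
        key2r π (ν N) hπprob (hνprob N)
      have h2 : tvDist π (ν N) ≤ tvDist (Tm π) π / 4 := by
        rw [tvDist_comm]; exact hN N le_rfl
      have h3 : tvDist (Tm (ν N)) π ≤ tvDist (Tm π) π / 4 := by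
        rw [← hνsucc N]; exact hN (N+1) (by omega)
      have h4 : tvDist (Tm π) π ≤ tvDist (Tm π) (Tm (ν N)) + tvDist (Tm (ν N)) π :=
        tvDist_triangle _ _ _
      have h5 : 0 ≤ tvDist π (ν N) := htv_nn _ _ hπprob (hνprob N)
      have hr1 : (1 - α₂ + lam₂) ≤ 1 := by linarith
      nlinarith
    exact eq_of_tvDist_eq_zero hle0
  -- uniqueness of Tm-fixed points
  have huniqT : ∀ ρ ρ' : Measure E, IsProbabilityMeasure ρ → IsProbabilityMeasure ρ' →
      Tm ρ = ρ → Tm ρ' = ρ' → ρ = ρ' := by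
    intro ρ ρ' hρ hρ' hfix hfix'
    haveI := hρ; haveI := hρ'
    have h := key2 ρ ρ' hρ hρ'
    rw [hfix, hfix'] at h
    set u : ℝ := tvDist ρ ρ' with hu
    have hu0 : 0 ≤ u := htv_nn _ _ hρ hρ'
    have hu2 : u ≤ 2 := htv_2 _ _ hρ hρ'
    have hle0 : u ≤ 0 := by
      by_contra hpos
      push_neg at hpos
      nlinarith [mul_pos hpos hpos, mul_pos hα₂0 hpos,
        mul_nonneg (sub_nonneg.mpr hlam₂α) hu0, mul_nonneg hlam₂0 (mul_nonneg hu0 hu0)]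
    exact eq_of_tvDist_eq_zero hle0
  -- S π = π
  have hSπprob : IsProbabilityMeasure (S π) := hprob_step _ hπprob
  have hSπ : S π = π := by
    refine huniqT (S π) π hSπprob hπprob ?_ hTmfix
    exact congrArg S hTmfix
  refine ⟨π, hπprob, hSπ, ?_, ?_⟩
  · intro π' hπ' hfix'
    refine huniqT π' π hπ' hπprob ?_ hTmfix
    show S (S π') = π'
    have : S π' = π' := hfix'
    rw [this, this]
  · intro μ0 hμ0 n
    have hmarg_succ : ∀ m, marginal P μ0 (m+1) = S (marginal P μ0 m) := fun m => rfl
    have hmarg_prob : ∀ m, IsProbabilityMeasure (marginal P μ0 m) := by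
      intro m
      induction m with
      | zero => exact hμ0
      | succ m ih => rw [hmarg_succ]; exact hprob_step _ ih
    have heven : ∀ k, tvDist (marginal P μ0 (2*k)) π ≤
        tvDist μ0 π * (1 - α₂ + lam₂) ^ k := by
      intro k
      induction k with
      | zero =>
        simp only [Nat.mul_zero, pow_zero, mul_one]
        exact le_refl (tvDist μ0 π)
      | succ k ih =>
        have hsucc2 : marginal P μ0 (2*(k+1)) = Tm (marginal P μ0 (2*k)) := by
          rw [show 2*(k+1) = (2*k)+1+1 by ring, hmarg_succ, hmarg_succ]
        rw [hsucc2]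
        calc tvDist (Tm (marginal P μ0 (2*k))) π
            = tvDist (Tm (marginal P μ0 (2*k))) (Tm π) := by rw [hTmfix]
          _ ≤ (1 - α₂ + lam₂) * tvDist (marginal P μ0 (2*k)) π :=
              key2r _ _ (hmarg_prob _) hπprob
          _ ≤ (1 - α₂ + lam₂) * (tvDist μ0 π * (1 - α₂ + lam₂) ^ k) :=
              mul_le_mul_of_nonneg_left ih hr0
          _ = tvDist μ0 π * (1 - α₂ + lam₂) ^ (k+1) := by ring
    rcases Nat.even_or_odd n with he | ho
    · obtain ⟨k, hk⟩ := he
      subst hk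
      rw [if_neg (by simp [Nat.not_odd_iff_even.mpr ⟨k, rfl⟩] : ¬ Odd (k+k))]
      rw [mul_one, show (k+k)/2 = k by omega]
      have := heven k
      rwa [show 2*k = k+k by ring] at this
    · obtain ⟨k, hk⟩ := ho
      subst hk
      rw [if_pos ⟨k, rfl⟩, show (2*k+1)/2 = k by omega]
      have hm : marginal P μ0 (2*k+1) = S (marginal P μ0 (2*k)) := hmarg_succ _
      rw [hm]
      have h1 : tvDist (S (marginal P μ0 (2*k))) π
          = tvDist (S (marginal P μ0 (2*k))) (S π) := by
        conv_lhs => rw [← hSπ]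
      rw [h1]
      calc tvDist (S (marginal P μ0 (2*k))) (S π)
          ≤ (1 + lam₁) * tvDist (marginal P μ0 (2*k)) π :=
            key1 _ _ (hmarg_prob _) hπprob
        _ ≤ (1 + lam₁) * (tvDist μ0 π * (1 - α₂ + lam₂) ^ k) :=
            mul_le_mul_of_nonneg_left (heven k) (by linarith)
        _ = tvDist μ0 π * (1 - α₂ + lam₂) ^ k * (1 + lam₁) := by ring
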